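/- (Key inequality in Theorem 2) Let ω ∈ (0,2) and θ ≥ 0 be such that δ = 2θ/ω + ((2−ω)/ω)·minᵢ Dᵢᵢ > 0. Let x* be a global minimizer of f, let z be a triangle-proximal point of x, and suppose the error bound ‖x − x*‖ ≤ η·‖x − z‖ holds for some constant η > 0. Then f(z) − f(x*) ≤ C₁·(f(x) − f(z)), where C₁ = ((3 + η²)‖C‖ + 2(η² + 1)‖A‖)/δ. -/

import Mathlib

open scoped RealInnerProductSpace
open Matrix Filter

noncomputable section

/-- Euclidean space ℝⁿ. -/
abbrev E (n : ℕ) := EuclideanSpace ℝ (Fin n)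

/-- Matrix-vector multiplication, valued in Euclidean space. -/
def mulVecE {n : ℕ} (M : Matrix (Fin n) (Fin n) ℝ) (x : E n) : E n :=
  (WithLp.equiv 2 (Fin n → ℝ)).symm (M.mulVec ((WithLp.equiv 2 (Fin n → ℝ)) x))

/-- Operator (spectral) norm of a matrix. -/
def opNorm {n : ℕ} (M : Matrix (Fin n) (Fin n) ℝ) : ℝ :=
  ‖Matrix.toEuclideanCLM (𝕜 := ℝ) M‖

/-- The diagonal part `D` of `A`. -/
def Dmat {n : ℕ} (A : Matrix (Fin n) (Fin n) ℝ) : Matrix (Fin n) (Fin n) ℝ :=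
  Matrix.diagonal fun i => A i i

/-- The strictly lower triangular part `L` of `A`. -/
def Lmat {n : ℕ} (A : Matrix (Fin n) (Fin n) ℝ) : Matrix (Fin n) (Fin n) ℝ :=
  Matrix.of fun i j => if (j : ℕ) < (i : ℕ) then A i j else 0

/-- `B = L + (1/ω)(D + θI)`. -/
def Bmat {n : ℕ} (ω θ : ℝ) (A : Matrix (Fin n) (Fin n) ℝ) : Matrix (Fin n) (Fin n) ℝ :=
  Lmat A + ω⁻¹ • (Dmat A + θ • (1 : Matrix (Fin n) (Fin n) ℝ))

/-- `C = Lᵀ + (1/ω)((ω−1)D − θI)`. -/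
def Cmat {n : ℕ} (ω θ : ℝ) (A : Matrix (Fin n) (Fin n) ℝ) : Matrix (Fin n) (Fin n) ℝ :=
  (Lmat A)ᵀ + ω⁻¹ • ((ω - 1) • Dmat A - θ • (1 : Matrix (Fin n) (Fin n) ℝ))

/-- `v` is a subgradient of `h` at `z`. -/
def IsSubgradient {n : ℕ} (h : E n → ℝ) (v z : E n) : Prop :=
  ∀ y, h z + ⟪v, y - z⟫ ≤ h y

/-- The composite objective `f(x) = (1/2)⟨x, Ax⟩ + ⟨b, x⟩ + h(x)`. -/
def fObj {n : ℕ} (A : Matrix (Fin n) (Fin n) ℝ) (b : E n) (h : E n → ℝ) (x : E n) : ℝ :=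
  (1/2) * ⟪x, mulVecE A x⟫ + ⟪b, x⟫ + h x

/-- `z` is a triangle-proximal point of `x`: there is a subgradient `v` of `h` at `z`
with `Bz + b + Cx + v = 0`. -/
def IsTriangleProx {n : ℕ} (ω θ : ℝ) (A : Matrix (Fin n) (Fin n) ℝ) (b : E n)
    (h : E n → ℝ) (x z : E n) : Prop :=
  ∃ v, IsSubgradient h v z ∧
    mulVecE (Bmat ω θ A) z + b + mulVecE (Cmat ω θ A) x + v = 0
lemma mulVecE_eq {n : ℕ} (M : Matrix (Fin n) (Fin n) ℝ) (x : E n) :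
    mulVecE M x = Matrix.toEuclideanCLM (𝕜 := ℝ) M x := by
  conv_rhs => rw [show x = (WithLp.equiv 2 (Fin n → ℝ)).symm ((WithLp.equiv 2 (Fin n → ℝ)) x)
    from (Equiv.symm_apply_apply _ _).symm]
  rw [WithLp.equiv_symm_apply, Matrix.toEuclideanCLM_toLp]
  simp [mulVecE, Matrix.toLin'_apply]

lemma mulVecE_apply {n : ℕ} (M : Matrix (Fin n) (Fin n) ℝ) (x : E n) (i : Fin n) :
    mulVecE M x i = ∑ j, M i j * x j := rfl

lemma inner_mulVecE {n : ℕ} (M : Matrix (Fin n) (Fin n) ℝ) (u w : E n) :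
    ⟪u, mulVecE M w⟫ = ∑ i, ∑ j, u i * (M i j * w j) := by
  simp [PiLp.inner_apply, mulVecE_apply, Finset.mul_sum]
  simp only [Finset.sum_mul]
  exact Finset.sum_congr rfl fun i _ => Finset.sum_congr rfl fun j _ => by ring

lemma abs_inner_mulVecE_le {n : ℕ} (M : Matrix (Fin n) (Fin n) ℝ) (u w : E n) :
    |⟪u, mulVecE M w⟫| ≤ opNorm M * ‖w‖ * ‖u‖ := by
  rw [mulVecE_eq]
  calc |⟪u, Matrix.toEuclideanCLM (𝕜 := ℝ) M w⟫| ≤ ‖u‖ * ‖Matrix.toEuclideanCLM (𝕜 := ℝ) M w‖ :=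
        abs_real_inner_le_norm _ _
    _ ≤ ‖u‖ * (opNorm M * ‖w‖) := by
        gcongr
        exact (Matrix.toEuclideanCLM (𝕜 := ℝ) M).le_opNorm w
    _ = opNorm M * ‖w‖ * ‖u‖ := by ring

lemma inner_mulVecE_symm {n : ℕ} {A : Matrix (Fin n) (Fin n) ℝ} (hA : A.IsSymm) (u w : E n) :
    ⟪mulVecE A u, w⟫ = ⟪u, mulVecE A w⟫ := by
  rw [real_inner_comm, inner_mulVecE, inner_mulVecE, Finset.sum_comm]
  refine Finset.sum_congr rfl fun i _ => Finset.sum_congr rfl fun j _ => ?_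
  rw [hA.apply i j]
  ring

lemma BC_sum {n : ℕ} {ω θ : ℝ} (hω : ω ≠ 0) {A : Matrix (Fin n) (Fin n) ℝ} (hA : A.IsSymm) :
    Bmat ω θ A + Cmat ω θ A = A := by
  ext i j
  simp only [Bmat, Cmat, Lmat, Dmat, Matrix.add_apply, Matrix.smul_apply, Matrix.sub_apply,
    Matrix.transpose_apply, Matrix.diagonal_apply, Matrix.one_apply, Matrix.of_apply, smul_eq_mul]
  rcases lt_trichotomy (j : ℕ) (i : ℕ) with hlt | heq | hgt
  · have h1 : ¬ ((i : ℕ) < (j : ℕ)) := by omega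
    have h2 : i ≠ j := fun hij => by omega
    simp [hlt, h1, h2]
  · have h2 : i = j := Fin.ext heq.symm
    have h1 : ¬ ((i : ℕ) < (j : ℕ)) := by omega
    have h1' : ¬ ((j : ℕ) < (i : ℕ)) := by omega
    subst h2
    simp only [h1, if_neg h1', if_pos rfl, if_true]
    field_simp
    simp
    ring
  · have h1 : ¬ ((j : ℕ) < (i : ℕ)) := by omega
    have h2 : i ≠ j := fun hij => by omega
    simp [hgt, h1, h2, hA.apply i j]

lemma BC_diff {n : ℕ} {ω θ : ℝ} (A : Matrix (Fin n) (Fin n) ℝ) :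
    Bmat ω θ A - Cmat ω θ A
      = (Lmat A - (Lmat A)ᵀ) + ω⁻¹ • ((2 - ω) • Dmat A + (2 * θ) • (1 : Matrix (Fin n) (Fin n) ℝ)) := by
  ext i j
  simp only [Bmat, Cmat, Matrix.add_apply, Matrix.sub_apply, Matrix.smul_apply, smul_eq_mul]
  ring

lemma mulVecE_add_mat {n : ℕ} (M N : Matrix (Fin n) (Fin n) ℝ) (x : E n) :
    mulVecE (M + N) x = mulVecE M x + mulVecE N x := by
  simp [mulVecE_eq, map_add]

lemma mulVecE_smul_mat {n : ℕ} (c : ℝ) (M : Matrix (Fin n) (Fin n) ℝ) (x : E n) :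
    mulVecE (c • M) x = c • mulVecE M x := by
  simp only [mulVecE_eq, _root_.map_smul, ContinuousLinearMap.coe_smul', Pi.smul_apply]

lemma mulVecE_add_vec {n : ℕ} (M : Matrix (Fin n) (Fin n) ℝ) (x y : E n) :
    mulVecE M (x + y) = mulVecE M x + mulVecE M y := by
  simp [mulVecE_eq, map_add]

lemma inner_mulVecE_diag {n : ℕ} (c : Fin n → ℝ) (d : E n) :
    ⟪d, mulVecE (Matrix.diagonal c) d⟫ = ∑ i, c i * d i ^ 2 := by
  rw [inner_mulVecE]
  refine Finset.sum_congr rfl fun i _ => ?_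
  rw [Finset.sum_eq_single i]
  · simp [Matrix.diagonal_apply_eq]; ring
  · intro j _ hj
    simp [Matrix.diagonal_apply_ne' _ hj]
  · intro hi; exact absurd (Finset.mem_univ i) hi

lemma inner_mulVecE_antisym {n : ℕ} (A : Matrix (Fin n) (Fin n) ℝ) (d : E n) :
    ⟪d, mulVecE (Lmat A - (Lmat A)ᵀ) d⟫ = 0 := by
  rw [inner_mulVecE]
  have key : ∀ i j : Fin n, d i * ((Lmat A - (Lmat A)ᵀ) i j * d j)
      = d i * (Lmat A i j * d j) - d j * (Lmat A j i * d i) := by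
    intro i j
    simp only [Matrix.sub_apply, Matrix.transpose_apply]
    ring
  simp_rw [key, Finset.sum_sub_distrib]
  rw [sub_eq_zero, Finset.sum_comm]

lemma norm_sq_eq_sum {n : ℕ} (d : E n) : ‖d‖ ^ 2 = ∑ i, d i ^ 2 := by
  rw [← real_inner_self_eq_norm_sq]
  simp only [PiLp.inner_apply, RCLike.inner_apply, conj_trivial, sq]

lemma delta_le {n : ℕ} (hn : 0 < n) {ω θ : ℝ} (hω : ω ∈ Set.Ioo (0 : ℝ) 2) (hθ : 0 ≤ θ)
    (A : Matrix (Fin n) (Fin n) ℝ) (d : E n) :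
    (2 * θ / ω + (2 - ω) / ω * ⨅ i, A i i) * ‖d‖ ^ 2
      ≤ ⟪d, mulVecE (Bmat ω θ A - Cmat ω θ A) d⟫ := by
  haveI : Nonempty (Fin n) := ⟨⟨0, hn⟩⟩
  obtain ⟨hω0, hω2⟩ := hω
  have hdiag : (2 - ω) • Dmat A + (2 * θ) • (1 : Matrix (Fin n) (Fin n) ℝ)
      = Matrix.diagonal (fun i => (2 - ω) * A i i + 2 * θ) := by
    ext i j
    by_cases hij : i = j <;>
      simp [Dmat, Matrix.diagonal_apply, Matrix.one_apply, hij]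
  rw [BC_diff, mulVecE_add_mat, inner_add_right, inner_mulVecE_antisym, zero_add,
    mulVecE_smul_mat, inner_smul_right, hdiag, inner_mulVecE_diag]
  set m := ⨅ i, A i i with hm
  have hbound : ∀ i : Fin n, ((2 - ω) * m + 2 * θ) * d i ^ 2
      ≤ ((2 - ω) * A i i + 2 * θ) * d i ^ 2 := by
    intro i
    have hmi : m ≤ A i i := ciInf_le (Set.Finite.bddBelow (Set.finite_range _)) i
    have : (2 - ω) * m ≤ (2 - ω) * A i i := by nlinarith
    nlinarith [sq_nonneg (d i)]
  have hωne : ω ≠ 0 := ne_of_gt hω0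
  have hco : 2 * θ / ω + (2 - ω) / ω * m = ω⁻¹ * ((2 - ω) * m + 2 * θ) := by
    field_simp; ring
  calc (2 * θ / ω + (2 - ω) / ω * m) * ‖d‖ ^ 2
      = ω⁻¹ * (((2 - ω) * m + 2 * θ) * ∑ i, d i ^ 2) := by
        rw [norm_sq_eq_sum, hco, mul_assoc]
    _ ≤ ω⁻¹ * ∑ i, ((2 - ω) * A i i + 2 * θ) * d i ^ 2 := by
        apply mul_le_mul_of_nonneg_left _ (by positivity)
        rw [Finset.mul_sum]
        exact Finset.sum_le_sum fun i _ => hbound i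

set_option maxHeartbeats 1000000 in
/-- key inequality in Theorem 2. -/
theorem msm_key_inequality_thm2 {n : ℕ} (hn : 0 < n)
    (A : Matrix (Fin n) (Fin n) ℝ) (hA : A.IsSymm) (b : E n) (h : E n → ℝ)
    (ω θ : ℝ) (hω : ω ∈ Set.Ioo (0 : ℝ) 2) (hθ : 0 ≤ θ)
    (δ : ℝ) (hδ : δ = 2 * θ / ω + (2 - ω) / ω * ⨅ i, A i i) (hδpos : 0 < δ)
    (xstar : E n) (hxstar : ∀ y : E n, fObj A b h xstar ≤ fObj A b h y)
    (x z : E n) (hz : IsTriangleProx ω θ A b h x z)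
    (η : ℝ) (hη : 0 < η) (herr : ‖x - xstar‖ ≤ η * ‖x - z‖)
    (C₁ : ℝ)
    (hC₁ : C₁ = ((3 + η ^ 2) * opNorm (Cmat ω θ A)
        + 2 * (η ^ 2 + 1) * opNorm A) / δ) :
    fObj A b h z - fObj A b h xstar ≤ C₁ * (fObj A b h x - fObj A b h z) := by
  obtain ⟨v, hv, heq⟩ := hz
  have hωne : ω ≠ 0 := ne_of_gt hω.1
  have hBC : Bmat ω θ A + Cmat ω θ A = A := BC_sum hωne hA
  set d : E n := x - z with hd
  set w : E n := z - xstar with hw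
  have hxzd : x = z + d := by rw [hd]; abel
  have hzxw : z = xstar + w := by rw [hw]; abel
  have hv_eq : v = -(mulVecE (Bmat ω θ A) z + b + mulVecE (Cmat ω θ A) x) :=
    eq_neg_of_add_eq_zero_right heq
  have hsw : ∀ u₁ u₂ : E n, ⟪u₁, mulVecE A u₂⟫ = ⟪u₂, mulVecE A u₁⟫ := by
    intro u₁ u₂
    rw [real_inner_comm]; exact inner_mulVecE_symm hA u₂ u₁
  -- quadratic expansions
  have hq_x : ⟪x, mulVecE A x⟫
      = ⟪z, mulVecE A z⟫ + 2 * ⟪d, mulVecE A z⟫ + ⟪d, mulVecE A d⟫ := by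
    rw [hxzd, mulVecE_add_vec, inner_add_left, inner_add_right, inner_add_right, hsw z d]
    ring
  have hq_z : ⟪z, mulVecE A z⟫
      = ⟪xstar, mulVecE A xstar⟫ + 2 * ⟪w, mulVecE A xstar⟫ + ⟪w, mulVecE A w⟫ := by
    rw [hzxw, mulVecE_add_vec, inner_add_left, inner_add_right, inner_add_right, hsw xstar w]
    ring
  -- key inner product identities
  have hBCz : ∀ u : E n, ⟪mulVecE (Bmat ω θ A) z, u⟫ + ⟪mulVecE (Cmat ω θ A) z, u⟫
      = ⟪mulVecE A z, u⟫ := by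
    intro u; rw [← inner_add_left, ← mulVecE_add_mat, hBC]
  have hCx : ∀ u : E n, ⟪mulVecE (Cmat ω θ A) x, u⟫
      = ⟪mulVecE (Cmat ω θ A) z, u⟫ + ⟪mulVecE (Cmat ω θ A) d, u⟫ := by
    intro u; rw [hxzd, mulVecE_add_vec, inner_add_left]
  -- STEP 1 : descent property
  have step1 : δ / 2 * ‖d‖ ^ 2 ≤ fObj A b h x - fObj A b h z := by
    have h1 : h z + ⟪v, d⟫ ≤ h x := by
      have := hv x; rwa [← hd] at this
    have hvd : ⟪v, d⟫
        = -(⟪mulVecE A z, d⟫ + ⟪b, d⟫ + ⟪mulVecE (Cmat ω θ A) d, d⟫) := by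
      rw [hv_eq, inner_neg_left, inner_add_left, inner_add_left, hCx d]
      have := hBCz d
      linarith
    have hdd : ⟪d, mulVecE A d⟫
        = ⟪d, mulVecE (Bmat ω θ A) d⟫ + ⟪d, mulVecE (Cmat ω θ A) d⟫ := by
      rw [← inner_add_right, ← mulVecE_add_mat, hBC]
    have hsubm : ⟪d, mulVecE (Bmat ω θ A - Cmat ω θ A) d⟫
        = ⟪d, mulVecE (Bmat ω θ A) d⟫ - ⟪d, mulVecE (Cmat ω θ A) d⟫ := by
      rw [sub_eq_add_neg, ← neg_one_smul ℝ (Cmat ω θ A), mulVecE_add_mat, mulVecE_smul_mat,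
        inner_add_right, inner_smul_right]
      ring
    have hdelta := delta_le hn hω hθ A d
    rw [← hδ, hsubm] at hdelta
    have hCdd : ⟪mulVecE (Cmat ω θ A) d, d⟫ = ⟪d, mulVecE (Cmat ω θ A) d⟫ :=
      real_inner_comm _ _
    have hAzd : ⟪mulVecE A z, d⟫ = ⟪d, mulVecE A z⟫ := real_inner_comm _ _
    have hbx : ⟪b, x⟫ = ⟪b, z⟫ + ⟪b, d⟫ := by rw [hxzd, inner_add_right]
    simp only [fObj]
    rw [hq_x, hbx]
    rw [hCdd, hAzd] at hvd
    linarith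
  -- STEP 2 : upper bound on f z - f xstar
  have step2 : fObj A b h z - fObj A b h xstar
      ≤ 1 / 2 * opNorm A * ‖w‖ ^ 2 + opNorm (Cmat ω θ A) * ‖d‖ * ‖w‖ := by
    have h1 : h z - h xstar ≤ ⟪v, w⟫ := by
      have h2 := hv xstar
      have h3 : xstar - z = -w := by rw [hw]; abel
      rw [h3, inner_neg_right] at h2
      linarith
    have hvw : ⟪v, w⟫
        = -(⟪mulVecE A xstar, w⟫ + ⟪mulVecE A w, w⟫ + ⟪mulVecE (Cmat ω θ A) d, w⟫ + ⟪b, w⟫) := by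
      rw [hv_eq, inner_neg_left, inner_add_left, inner_add_left, hCx w]
      have h4 := hBCz w
      have h5 : ⟪mulVecE A z, w⟫ = ⟪mulVecE A xstar, w⟫ + ⟪mulVecE A w, w⟫ := by
        rw [hzxw, mulVecE_add_vec, inner_add_left]
      linarith
    have hbz : ⟪b, z⟫ = ⟪b, xstar⟫ + ⟪b, w⟫ := by rw [hzxw, inner_add_right]
    have hAxw : ⟪mulVecE A xstar, w⟫ = ⟪w, mulVecE A xstar⟫ := real_inner_comm _ _
    have hAww : ⟪mulVecE A w, w⟫ = ⟪w, mulVecE A w⟫ := real_inner_comm _ _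
    have hCdw : ⟪mulVecE (Cmat ω θ A) d, w⟫ = ⟪w, mulVecE (Cmat ω θ A) d⟫ :=
      real_inner_comm _ _
    have hbd1 : |⟪w, mulVecE A w⟫| ≤ opNorm A * ‖w‖ * ‖w‖ := abs_inner_mulVecE_le A w w
    have hbd2 : |⟪w, mulVecE (Cmat ω θ A) d⟫| ≤ opNorm (Cmat ω θ A) * ‖d‖ * ‖w‖ :=
      abs_inner_mulVecE_le (Cmat ω θ A) w d
    have hbd1' := abs_le.1 hbd1
    have hbd2' := abs_le.1 hbd2
    simp only [fObj]
    rw [hq_z, hbz]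
    rw [hAxw, hAww, hCdw] at hvw
    have hsq : ‖w‖ * ‖w‖ = ‖w‖ ^ 2 := (sq ‖w‖).symm
    linarith [hbd1'.1, hbd2'.1]
  -- STEP 3 : combine
  have hwle : ‖w‖ ≤ (1 + η) * ‖d‖ := by
    have h6 : w = (x - xstar) - d := by rw [hw, hd]; abel
    have h7 : ‖w‖ ≤ ‖x - xstar‖ + ‖d‖ := by rw [h6]; exact norm_sub_le _ _
    have h8 : ‖x - z‖ = ‖d‖ := by rw [hd]
    rw [h8] at herr
    linarith
  have hN1 : (0:ℝ) ≤ opNorm (Cmat ω θ A) := norm_nonneg _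
  have hN2 : (0:ℝ) ≤ opNorm A := norm_nonneg _
  have ha : (0:ℝ) ≤ ‖d‖ := norm_nonneg _
  have hc : (0:ℝ) ≤ ‖w‖ := norm_nonneg _
  have hC₁δ : C₁ * δ = (3 + η ^ 2) * opNorm (Cmat ω θ A) + 2 * (η ^ 2 + 1) * opNorm A := by
    rw [hC₁]; field_simp
  have hC₁nonneg : (0:ℝ) ≤ C₁ := by
    rw [hC₁]
    apply div_nonneg _ (le_of_lt hδpos)
    nlinarith [sq_nonneg η]
  have hkey : fObj A b h z - fObj A b h xstar ≤ C₁ * δ / 2 * ‖d‖ ^ 2 := by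
    have hc2 : ‖w‖ ^ 2 ≤ (1 + η) ^ 2 * ‖d‖ ^ 2 := by nlinarith
    have hac : ‖d‖ * ‖w‖ ≤ (1 + η) * ‖d‖ ^ 2 := by nlinarith
    have e1' : opNorm A * ‖w‖ ^ 2 ≤ opNorm A * ((1 + η) ^ 2 * ‖d‖ ^ 2) :=
      mul_le_mul_of_nonneg_left hc2 hN2
    have e1 : 1 / 2 * opNorm A * ‖w‖ ^ 2 ≤ (η ^ 2 + 1) * opNorm A * ‖d‖ ^ 2 := by
      nlinarith [e1', mul_nonneg (mul_nonneg hN2 (sq_nonneg ‖d‖)) (sq_nonneg (η - 1))]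
    have e2' : opNorm (Cmat ω θ A) * (‖d‖ * ‖w‖)
        ≤ opNorm (Cmat ω θ A) * ((1 + η) * ‖d‖ ^ 2) := mul_le_mul_of_nonneg_left hac hN1
    have e2 : opNorm (Cmat ω θ A) * ‖d‖ * ‖w‖
        ≤ (3 + η ^ 2) / 2 * opNorm (Cmat ω θ A) * ‖d‖ ^ 2 := by
      nlinarith [e2', mul_nonneg (mul_nonneg hN1 (sq_nonneg ‖d‖)) (sq_nonneg (η - 1))]
    have : C₁ * δ / 2 * ‖d‖ ^ 2
        = ((3 + η ^ 2) / 2 * opNorm (Cmat ω θ A) + (η ^ 2 + 1) * opNorm A) * ‖d‖ ^ 2 := by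
      rw [hC₁δ]; ring
    rw [this]
    linarith [step2, e1, e2]
  have hfinal : C₁ * δ / 2 * ‖d‖ ^ 2 ≤ C₁ * (fObj A b h x - fObj A b h z) := by
    have := mul_le_mul_of_nonneg_left step1 hC₁nonneg
    calc C₁ * δ / 2 * ‖d‖ ^ 2 = C₁ * (δ / 2 * ‖d‖ ^ 2) := by ring
      _ ≤ _ := this
  linarith
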